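/- Suppose k is odd and set s = (k−1)/2. If a is odd with 3 ≤ a ≤ r−2, then z^{(a)}_s = z^{(a)}_{s+1}. -/

import Mathlib

/-- Orthogonal coordinates `u_i(λ)` of `λ + ρ` for the weight
`λ = λ_1 ω_1 + ⋯ + λ_r ω_r` of `D_r` given in fundamental-weight coordinates. -/
noncomputable def uCoord (r : ℕ) (lam : ℕ → ℤ) (i : ℕ) : ℝ :=
  if i = r then ((lam r : ℝ) - (lam (r - 1) : ℝ)) / 2
  else (∑ j ∈ Finset.Icc i (r - 2), (lam j : ℝ))
      + ((lam (r - 1) : ℝ) + (lam r : ℝ)) / 2 + ((r : ℝ) - (i : ℝ))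

/-- The level-`k` quantum dimension of the weight `λ` of `D_r`
(`h = 2r - 2` is the Coxeter number), given by the product over the
positive roots `e_i - e_j`, `e_i + e_j` (`1 ≤ i < j ≤ r`). -/
noncomputable def qdimD (r k : ℕ) (lam : ℕ → ℤ) : ℝ :=
  ∏ p ∈ (Finset.Icc 1 r ×ˢ Finset.Icc 1 r).filter (fun p => p.1 < p.2),
    (Real.sin (Real.pi * (uCoord r lam p.1 - uCoord r lam p.2) / (2 * (r : ℝ) - 2 + (k : ℝ)))
      * Real.sin (Real.pi * (uCoord r lam p.1 + uCoord r lam p.2) / (2 * (r : ℝ) - 2 + (k : ℝ))))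
    / (Real.sin (Real.pi * ((p.2 : ℝ) - (p.1 : ℝ)) / (2 * (r : ℝ) - 2 + (k : ℝ)))
      * Real.sin (Real.pi * (2 * (r : ℝ) - (p.1 : ℝ) - (p.2 : ℝ)) / (2 * (r : ℝ) - 2 + (k : ℝ))))

/-- The quantum dimension solution `z^{(a)}_m` of the `Q`-system of type `D_r`:
the specialization `Q^{(a)}_m(ρ/(h+k))` of the classical characters of the
Kirillov–Reshetikhin modules of type `D_r`. -/
noncomputable def zD (r k a m : ℕ) : ℝ :=
  if a = r - 1 ∨ a = r then
    qdimD r k (fun j => if j = a then (m : ℤ) else 0)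
  else if a % 2 = 1 then
    ∑ c ∈ (Fintype.piFinset (fun _ : Fin ((a + 1) / 2) => Finset.range (m + 1))).filter
        (fun c => ∑ i, c i = m),
      qdimD r k (fun j => ∑ i : Fin ((a + 1) / 2), if j = 2 * (i : ℕ) + 1 then (c i : ℤ) else 0)
  else
    ∑ c ∈ (Fintype.piFinset (fun _ : Fin (a / 2) => Finset.range (m + 1))).filter
        (fun c => ∑ i, c i ≤ m),
      qdimD r k (fun j => ∑ i : Fin (a / 2), if j = 2 * (i : ℕ) + 2 then (c i : ℤ) else 0)

/-- For odd level `k` with `s = (k-1)/2` and odd `a` with `3 ≤ a ≤ r-2`,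
`z^{(a)}_s = z^{(a)}_{s+1}`. -/
lemma aux_sin_flip (N x y : ℝ) (hN : N ≠ 0) :
    Real.sin (Real.pi * ((N - x) - y) / N) * Real.sin (Real.pi * ((N - x) + y) / N)
      = Real.sin (Real.pi * (x - y) / N) * Real.sin (Real.pi * (x + y) / N) := by
  have h1 : Real.pi * ((N - x) - y) / N = Real.pi - Real.pi * (x + y) / N := by
    field_simp; ring
  have h2 : Real.pi * ((N - x) + y) / N = Real.pi - Real.pi * (x - y) / N := by
    field_simp; ring
  rw [h1, h2, Real.sin_pi_sub, Real.sin_pi_sub, mul_comm]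

lemma qdim_flip (r k : ℕ) (hr : 4 ≤ r) (lam lam' : ℕ → ℤ)
    (h1 : uCoord r lam' 1 = (2 * (r : ℝ) - 2 + (k : ℝ)) - uCoord r lam 1)
    (hj : ∀ j, 2 ≤ j → uCoord r lam' j = uCoord r lam j) :
    qdimD r k lam' = qdimD r k lam := by
  have hN : (2 * (r : ℝ) - 2 + (k : ℝ)) ≠ 0 := by
    have h4 : (4 : ℝ) ≤ (r : ℝ) := by exact_mod_cast hr
    have h0 : (0 : ℝ) ≤ (k : ℝ) := Nat.cast_nonneg k
    nlinarith
  unfold qdimD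
  refine Finset.prod_congr rfl fun p hp => ?_
  simp only [Finset.mem_filter, Finset.mem_product, Finset.mem_Icc] at hp
  obtain ⟨⟨⟨hp1, _⟩, hp2, _⟩, hlt⟩ := hp
  rcases eq_or_ne p.1 1 with he | he
  · have h2 : 2 ≤ p.2 := by omega
    rw [he, h1, hj p.2 h2, aux_sin_flip _ _ _ hN]
  · rw [hj p.1 (by omega), hj p.2 (by omega)]

lemma qdim_zero (r k : ℕ) (hr : 4 ≤ r) (lam : ℕ → ℤ)
    (h : uCoord r lam 1 + uCoord r lam 2 = 2 * (r : ℝ) - 2 + (k : ℝ)) :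
    qdimD r k lam = 0 := by
  have hN : (2 * (r : ℝ) - 2 + (k : ℝ)) ≠ 0 := by
    have h4 : (4 : ℝ) ≤ (r : ℝ) := by exact_mod_cast hr
    have h0 : (0 : ℝ) ≤ (k : ℝ) := Nat.cast_nonneg k
    nlinarith
  unfold qdimD
  apply Finset.prod_eq_zero (i := ((1 : ℕ), (2 : ℕ)))
  · simp only [Finset.mem_filter, Finset.mem_product, Finset.mem_Icc]
    omega
  · rw [h]
    have hpi : Real.pi * (2 * (r : ℝ) - 2 + (k : ℝ)) / (2 * (r : ℝ) - 2 + (k : ℝ)) = Real.pi := by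
      rw [mul_div_assoc, div_self hN, mul_one]
    rw [hpi, Real.sin_pi]
    simp

lemma lam_hi (r t : ℕ) (hrt : 2 * t - 1 ≤ r - 2) (c : Fin t → ℕ) (j : ℕ) (hj : r - 1 ≤ j) :
    (∑ i : Fin t, if j = 2 * (i : ℕ) + 1 then (c i : ℤ) else 0) = 0 := by
  apply Finset.sum_eq_zero
  intro i _
  have hi := i.isLt
  rw [if_neg (by omega)]

lemma sum_lam (r t : ℕ) (hrt : 2 * t - 1 ≤ r - 2) (c : Fin t → ℕ) (i : ℕ) :
    (∑ j ∈ Finset.Icc i (r - 2),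
        ((∑ i' : Fin t, if j = 2 * (i' : ℕ) + 1 then (c i' : ℤ) else 0 : ℤ) : ℝ))
      = ∑ i' : Fin t, if i ≤ 2 * (i' : ℕ) + 1 then (c i' : ℝ) else 0 := by
  push_cast
  rw [Finset.sum_comm]
  refine Finset.sum_congr rfl fun i' _ => ?_
  rw [Finset.sum_ite_eq' (Finset.Icc i (r - 2)) (2 * (i' : ℕ) + 1) (fun _ => (c i' : ℝ))]
  have hi := i'.isLt
  simp only [Finset.mem_Icc]
  congr 1
  simp only [eq_iff_iff]
  omega

lemma u_one (r t : ℕ) (hr : 4 ≤ r) (hrt : 2 * t - 1 ≤ r - 2) (c : Fin t → ℕ) :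
    uCoord r (fun j => ∑ i : Fin t, if j = 2 * (i : ℕ) + 1 then (c i : ℤ) else 0) 1
      = (∑ i, (c i : ℝ)) + ((r : ℝ) - 1) := by
  simp only [uCoord]
  rw [if_neg (by omega)]
  rw [lam_hi r t hrt c (r - 1) (le_refl _), lam_hi r t hrt c r (by omega),
      sum_lam r t hrt c 1]
  rw [Finset.sum_congr rfl (fun i' _ => if_pos (by omega) :
        ∀ i' ∈ Finset.univ, (if 1 ≤ 2 * ((i' : Fin t) : ℕ) + 1 then (c i' : ℝ) else 0) = (c i' : ℝ))]
  push_cast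
  ring

lemma u_two (r t : ℕ) [NeZero t] (hr : 4 ≤ r) (hrt : 2 * t - 1 ≤ r - 2)
    (c : Fin t → ℕ) (hc0 : c 0 = 0) :
    uCoord r (fun j => ∑ i : Fin t, if j = 2 * (i : ℕ) + 1 then (c i : ℤ) else 0) 2
      = (∑ i, (c i : ℝ)) + ((r : ℝ) - 2) := by
  simp only [uCoord]
  rw [if_neg (by omega)]
  rw [lam_hi r t hrt c (r - 1) (le_refl _), lam_hi r t hrt c r (by omega),
      sum_lam r t hrt c 2]
  have hcongr : ∀ i' ∈ Finset.univ,
      (if 2 ≤ 2 * ((i' : Fin t) : ℕ) + 1 then (c i' : ℝ) else 0) = (c i' : ℝ) := by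
    intro i' _
    rcases eq_or_ne i' 0 with rfl | hi'
    · rw [if_neg (by simp), hc0]
      simp
    · rw [if_pos ?_]
      have : (i' : ℕ) ≠ 0 := by have h := Fin.ext_iff.not.mp hi'; rwa [Fin.val_zero] at h
      omega
  rw [Finset.sum_congr rfl hcongr]
  push_cast
  ring

lemma lam_update (t : ℕ) [NeZero t] (c : Fin t → ℕ) (j : ℕ) (hj : j ≠ 1) :
    (∑ i : Fin t, if j = 2 * (i : ℕ) + 1 then ((Function.update c 0 (c 0 + 1)) i : ℤ) else 0)
      = ∑ i : Fin t, if j = 2 * (i : ℕ) + 1 then (c i : ℤ) else 0 := by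
  refine Finset.sum_congr rfl fun i _ => ?_
  rcases eq_or_ne i 0 with rfl | hi
  · rw [if_neg (by simp; omega), if_neg (by simp; omega)]
  · rw [Function.update_of_ne hi]

lemma uCoord_congr (r : ℕ) (hr : 4 ≤ r) (lam lam' : ℕ → ℤ)
    (h : ∀ j, j ≠ 1 → lam' j = lam j) (j : ℕ) (hj : 2 ≤ j) :
    uCoord r lam' j = uCoord r lam j := by
  simp only [uCoord]
  rw [h r (by omega), h (r - 1) (by omega)]
  rcases eq_or_ne j r with rfl | hne
  · rw [if_pos rfl, if_pos rfl]
  · rw [if_neg hne, if_neg hne]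
    congr 2
    refine Finset.sum_congr rfl fun j' hj' => ?_
    rw [Finset.mem_Icc] at hj'
    rw [h j' (by omega)]

open Finset in
theorem stmt6 (r k : ℕ) (hr : 4 ≤ r) (hk : 1 ≤ k) (hkodd : k % 2 = 1)
    (a : ℕ) (ha3 : 3 ≤ a) (har : a ≤ r - 2) (haodd : a % 2 = 1) :
    zD r k a ((k - 1) / 2) = zD r k a ((k - 1) / 2 + 1) := by
  have hs : k = 2 * ((k - 1) / 2) + 1 := by omega
  set s := (k - 1) / 2 with hsdef
  have hna : ¬(a = r - 1 ∨ a = r) := by omega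
  unfold zD
  rw [if_neg hna, if_neg hna, if_pos haodd, if_pos haodd]
  set t := (a + 1) / 2 with htdef
  have ht2 : 2 ≤ t := by omega
  haveI : NeZero t := ⟨by omega⟩
  have hrt : 2 * t - 1 ≤ r - 2 := by omega
  have hkR : (k : ℝ) = 2 * (s : ℝ) + 1 := by exact_mod_cast hs
  -- the two index sets
  set F1 : Finset (Fin t → ℕ) :=
    (Fintype.piFinset (fun _ : Fin t => Finset.range (s + 1))).filter (fun c => ∑ i, c i = s)
    with hF1
  set F2 : Finset (Fin t → ℕ) :=
    (Fintype.piFinset (fun _ : Fin t => Finset.range (s + 1 + 1))).filter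
      (fun c => ∑ i, c i = s + 1) with hF2
  have memF1 : ∀ c : Fin t → ℕ, c ∈ F1 ↔ (∀ i, c i < s + 1) ∧ ∑ i, c i = s := by
    intro c
    simp [hF1, Fintype.mem_piFinset]
  have memF2 : ∀ c : Fin t → ℕ, c ∈ F2 ↔ (∀ i, c i < s + 2) ∧ ∑ i, c i = s + 1 := by
    intro c
    simp [hF2, Fintype.mem_piFinset]
    intro _; exact forall_congr' fun i => by omega
  set S' : Finset (Fin t → ℕ) := F2.filter (fun c => c 0 ≠ 0) with hS'
  -- sum decomposition facts
  have hdecomp : ∀ c : Fin t → ℕ, ∑ i, c i = (∑ i ∈ Finset.univ \ {(0 : Fin t)}, c i) + c 0 :=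
    fun c => Finset.sum_eq_sum_sdiff_singleton_add (Finset.mem_univ (0 : Fin t)) c
  have hupd : ∀ (v : ℕ) (c : Fin t → ℕ),
      ∑ i, Function.update c 0 v i = v + ∑ i ∈ Finset.univ \ {(0 : Fin t)}, c i :=
    fun v c => Finset.sum_update_of_mem (Finset.mem_univ (0 : Fin t)) c v
  -- vanishing of the terms with c 0 = 0
  have hvan : ∀ c ∈ F2, c ∉ S' →
      qdimD r k (fun j => ∑ i : Fin t, if j = 2 * (i : ℕ) + 1 then (c i : ℤ) else 0) = 0 := by
    intro c hc hc'
    have hc0 : c 0 = 0 := by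
      by_contra h0
      exact hc' (Finset.mem_filter.2 ⟨hc, h0⟩)
    have hsum : ∑ i, c i = s + 1 := ((memF2 c).1 hc).2
    apply qdim_zero r k hr
    rw [u_one r t hr hrt c, u_two r t hr hrt c hc0]
    have hcs : (∑ i, (c i : ℝ)) = (s : ℝ) + 1 := by exact_mod_cast hsum
    rw [hcs, hkR]
    ring
  rw [← Finset.sum_subset (Finset.filter_subset _ _ : S' ⊆ F2) hvan]
  -- the bijection
  refine Finset.sum_nbij' (fun c => Function.update c 0 (c 0 + 1))
    (fun c => Function.update c 0 (c 0 - 1)) ?_ ?_ ?_ ?_ ?_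
  · intro c hc
    obtain ⟨hlt, hsum⟩ := (memF1 c).1 hc
    have h0 : c 0 ≤ s := Nat.lt_succ_iff.1 (hlt 0)
    refine Finset.mem_filter.2 ⟨(memF2 _).2 ⟨?_, ?_⟩, ?_⟩
    · intro i
      rcases eq_or_ne i 0 with rfl | hi
      · rw [Function.update_self]; omega
      · rw [Function.update_of_ne hi]; exact lt_trans (hlt i) (by omega)
    · rw [hupd]
      have := hdecomp c
      omega
    · rw [Function.update_self]; omega
  · intro c hc
    obtain ⟨hc2, h0⟩ := Finset.mem_filter.1 hc
    obtain ⟨hlt, hsum⟩ := (memF2 c).1 hc2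
    have hd := hdecomp c
    have hle : ∀ i : Fin t, i ≠ 0 → c i ≤ ∑ i ∈ Finset.univ \ {(0 : Fin t)}, c i := by
      intro i hi
      exact Finset.single_le_sum (fun _ _ => Nat.zero_le _)
        (Finset.mem_sdiff.2 ⟨Finset.mem_univ i, by simpa using hi⟩)
    refine (memF1 _).2 ⟨?_, ?_⟩
    · intro i
      rcases eq_or_ne i 0 with rfl | hi
      · rw [Function.update_self]; omega
      · rw [Function.update_of_ne hi]
        have := hle i hi
        omega
    · rw [hupd]
      omega
  · intro c _
    rw [Function.update_self, Nat.add_sub_cancel, Function.update_idem, Function.update_eq_self]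
  · intro c hc
    have h0 : c 0 ≠ 0 := (Finset.mem_filter.1 hc).2
    rw [Function.update_self, Function.update_idem]
    have : c 0 - 1 + 1 = c 0 := by omega
    rw [this, Function.update_eq_self]
  · intro c hc
    obtain ⟨hlt, hsum⟩ := (memF1 c).1 hc
    refine (qdim_flip r k hr _ _ ?_ ?_).symm
    · rw [u_one r t hr hrt, u_one r t hr hrt]
      have h1 : ∑ i, Function.update c 0 (c 0 + 1) i = s + 1 := by
        rw [hupd]
        have := hdecomp c
        omega
      have h1R : (∑ i, ((Function.update c 0 (c 0 + 1)) i : ℝ)) = (s : ℝ) + 1 := by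
        exact_mod_cast h1
      have h2R : (∑ i, (c i : ℝ)) = (s : ℝ) := by exact_mod_cast hsum
      rw [h1R, h2R, hkR]
      ring
    · intro j hj
      exact uCoord_congr r hr _ _ (fun j' hj' => lam_update t c j' hj') j hj
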